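/- Internalisation of GCIs: a SHIQ concept C is satisfiable with respect to a terminology T and role hierarchy R if and only if the concept C ⊓ C_T ⊓ ∀U.C_T is satisfiable with respect to the extended role hierarchy R_U (with empty terminology), where C_T is the conjunction over all GCIs C_i ⊑ D_i in T of ¬C_i ⊔ D_i, U is a fresh transitive role, and R_U adds R ⊑ U and Inv(R) ⊑ U for every role R occurring in T, C, or R. -/

import Mathlib

namespace SHIQ

/-- Roles: role names and their inverses. -/
inductive SRole (Rn : Type) : Type where
  | name : Rn → SRole Rn
  | inv  : Rn → SRole Rn

/-- The function `Inv` on roles. -/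
def SRole.Inv {Rn : Type} : SRole Rn → SRole Rn
  | .name r => .inv r
  | .inv r  => .name r

/-- The underlying role name of a (possibly inverse) role. -/
def SRole.base {Rn : Type} : SRole Rn → Rn
  | .name r => r
  | .inv r  => r

/-- SHIQ concepts over concept names `Cn` and role names `Rn`. -/
inductive Concept (Cn Rn : Type) : Type where
  | atom : Cn → Concept Cn Rn
  | conj : Concept Cn Rn → Concept Cn Rn → Concept Cn Rn
  | disj : Concept Cn Rn → Concept Cn Rn → Concept Cn Rn
  | neg  : Concept Cn Rn → Concept Cn Rn
  | ex   : SRole Rn → Concept Cn Rn → Concept Cn Rn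
  | all  : SRole Rn → Concept Cn Rn → Concept Cn Rn
  | atLeast : ℕ → SRole Rn → Concept Cn Rn → Concept Cn Rn
  | atMost  : ℕ → SRole Rn → Concept Cn Rn → Concept Cn Rn

/-- An interpretation `I = (Δ, ·^I)`. -/
structure Interp (Cn Rn : Type) where
  Dom : Type
  dom_nonempty : Nonempty Dom
  cI : Cn → Set Dom
  rI : Rn → Set (Dom × Dom)

/-- Interpretation of (possibly inverse) roles. -/
def Interp.roleI {Cn Rn : Type} (I : Interp Cn Rn) : SRole Rn → Set (I.Dom × I.Dom)
  | .name r => I.rI r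
  | .inv r  => {p | (p.2, p.1) ∈ I.rI r}

/-- Extension of a concept in an interpretation. -/
def Interp.conceptI {Cn Rn : Type} (I : Interp Cn Rn) : Concept Cn Rn → Set I.Dom
  | .atom a => I.cI a
  | .conj c d => I.conceptI c ∩ I.conceptI d
  | .disj c d => I.conceptI c ∪ I.conceptI d
  | .neg c => (I.conceptI c)ᶜ
  | .ex S c => {x | ∃ y, (x, y) ∈ I.roleI S ∧ y ∈ I.conceptI c}
  | .all S c => {x | ∀ y, (x, y) ∈ I.roleI S → y ∈ I.conceptI c}
  | .atLeast n S c => {x | (n : ℕ∞) ≤ {y | (x, y) ∈ I.roleI S ∧ y ∈ I.conceptI c}.encard}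
  | .atMost n S c => {x | {y | (x, y) ∈ I.roleI S ∧ y ∈ I.conceptI c}.encard ≤ (n : ℕ∞)}

/-- `I` interprets each transitive role name in `Rp` as a transitive relation. -/
def Interp.respectsTrans {Cn Rn : Type} (I : Interp Cn Rn) (Rp : Set Rn) : Prop :=
  ∀ r ∈ Rp, ∀ x y z : I.Dom, (x, y) ∈ I.rI r → (y, z) ∈ I.rI r → (x, z) ∈ I.rI r

/-- A role hierarchy: a set of role inclusion axioms `R ⊑ S`. -/
abbrev RoleHierarchy (Rn : Type) := Set (SRole Rn × SRole Rn)

/-- `I` satisfies the role hierarchy `H`. -/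
def Interp.modelsH {Cn Rn : Type} (I : Interp Cn Rn) (H : RoleHierarchy Rn) : Prop :=
  ∀ p ∈ H, I.roleI p.1 ⊆ I.roleI p.2

/-- The relation `⊑*`: transitive-reflexive closure of `⊑` over `H` together with
the inverse axioms `Inv(R) ⊑ Inv(S)`. -/
def subRole {Rn : Type} (H : RoleHierarchy Rn) : SRole Rn → SRole Rn → Prop :=
  Relation.ReflTransGen (fun R S => (R, S) ∈ H ∨ (R.Inv, S.Inv) ∈ H)

/-- A terminology: a finite list of GCIs `C ⊑ D`. -/
abbrev Terminology (Cn Rn : Type) := List (Concept Cn Rn × Concept Cn Rn)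

/-- `I` satisfies the terminology `T`. -/
def Interp.modelsT {Cn Rn : Type} (I : Interp Cn Rn) (T : Terminology Cn Rn) : Prop :=
  ∀ p ∈ T, I.conceptI p.1 ⊆ I.conceptI p.2

/-- The set of roles occurring in a concept. -/
def Concept.rolesOf {Cn Rn : Type} : Concept Cn Rn → Set (SRole Rn)
  | .atom _ => ∅
  | .conj c d => c.rolesOf ∪ d.rolesOf
  | .disj c d => c.rolesOf ∪ d.rolesOf
  | .neg c => c.rolesOf
  | .ex S c => insert S c.rolesOf
  | .all S c => insert S c.rolesOf
  | .atLeast _ S c => insert S c.rolesOf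
  | .atMost _ S c => insert S c.rolesOf

/-- The set of roles occurring in a terminology. -/
def Terminology.rolesOf {Cn Rn : Type} (T : Terminology Cn Rn) : Set (SRole Rn) :=
  {S | ∃ p ∈ T, S ∈ p.1.rolesOf ∪ p.2.rolesOf}

/-- The set of roles occurring in a role hierarchy. -/
def RoleHierarchy.rolesOf {Rn : Type} (H : RoleHierarchy Rn) : Set (SRole Rn) :=
  {S | ∃ p ∈ H, S = p.1 ∨ S = p.2}

/-- The concept `¬C ⊔ D` corresponding to a GCI `C ⊑ D`. -/
def gciConcept {Cn Rn : Type} (p : Concept Cn Rn × Concept Cn Rn) : Concept Cn Rn :=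
  .disj (.neg p.1) p.2

/-- `C_T`: the conjunction of `¬C_i ⊔ D_i` over all GCIs `C_i ⊑ D_i` of `T`
(for the empty terminology we take the tautology `A ⊔ ¬A`). -/
def CT {Cn Rn : Type} (a : Cn) : Terminology Cn Rn → Concept Cn Rn
  | [] => .disj (.atom a) (.neg (.atom a))
  | [p] => gciConcept p
  | p :: q :: T => .conj (gciConcept p) (CT a (q :: T))

/-- `R_U`: the role hierarchy `H` extended by `R ⊑ U` and `Inv(R) ⊑ U` for every
role `R` in the given set of roles. -/
def addU {Rn : Type} (H : RoleHierarchy Rn) (roles : Set (SRole Rn)) (u : Rn) :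
    RoleHierarchy Rn :=
  H ∪ {p | ∃ S ∈ roles, p = (S, SRole.name u) ∨ p = (S.Inv, SRole.name u)}

section Aux

variable {Cn Rn : Type}

/-- Extend an interpretation by making `u` the universal role. -/
def extendU (I : Interp Cn Rn) (u : Rn) : Interp Cn Rn where
  Dom := I.Dom
  dom_nonempty := I.dom_nonempty
  cI := I.cI
  rI := fun r => {p | r = u ∨ p ∈ I.rI r}

lemma extendU_roleI (I : Interp Cn Rn) (u : Rn) (S : SRole Rn) (h : S.base ≠ u) :
    (extendU I u).roleI S = I.roleI S := by
  cases S with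
  | name r =>
      ext p; simp only [Interp.roleI, extendU, Set.mem_setOf_eq]
      exact or_iff_right (by exact h)
  | inv r =>
      ext p; simp only [Interp.roleI, extendU, Set.mem_setOf_eq]
      exact or_iff_right (by exact h)

lemma extendU_conceptI (I : Interp Cn Rn) (u : Rn) (e : Concept Cn Rn)
    (h : ∀ S ∈ e.rolesOf, S.base ≠ u) : (extendU I u).conceptI e = I.conceptI e := by
  induction e with
  | atom a => rfl
  | conj c d ihc ihd =>
      simp only [Interp.conceptI,
        ihc (fun S hS => h S (Set.mem_union_left _ hS)),
        ihd (fun S hS => h S (Set.mem_union_right _ hS))]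
      rfl
  | disj c d ihc ihd =>
      simp only [Interp.conceptI,
        ihc (fun S hS => h S (Set.mem_union_left _ hS)),
        ihd (fun S hS => h S (Set.mem_union_right _ hS))]
      rfl
  | neg c ihc =>
      simp only [Interp.conceptI, ihc (fun S hS => h S hS)]
      rfl
  | ex S c ihc =>
      simp only [Interp.conceptI,
        extendU_roleI I u S (h S (Set.mem_insert _ _)),
        ihc (fun S' hS => h S' (Set.mem_insert_of_mem _ hS))]
      rfl
  | all S c ihc =>
      simp only [Interp.conceptI,
        extendU_roleI I u S (h S (Set.mem_insert _ _)),
        ihc (fun S' hS => h S' (Set.mem_insert_of_mem _ hS))]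
      rfl
  | atLeast n S c ihc =>
      simp only [Interp.conceptI,
        extendU_roleI I u S (h S (Set.mem_insert _ _)),
        ihc (fun S' hS => h S' (Set.mem_insert_of_mem _ hS))]
      rfl
  | atMost n S c ihc =>
      simp only [Interp.conceptI,
        extendU_roleI I u S (h S (Set.mem_insert _ _)),
        ihc (fun S' hS => h S' (Set.mem_insert_of_mem _ hS))]
      rfl

lemma conceptI_gci (I : Interp Cn Rn) (p : Concept Cn Rn × Concept Cn Rn) (x : I.Dom) :
    x ∈ I.conceptI (gciConcept p) ↔ (x ∈ I.conceptI p.1 → x ∈ I.conceptI p.2) := by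
  simp only [gciConcept, Interp.conceptI, Set.mem_union, Set.mem_compl_iff]
  tauto

lemma mem_CT (I : Interp Cn Rn) (a : Cn) (T : Terminology Cn Rn) (x : I.Dom) :
    x ∈ I.conceptI (CT a T) ↔ ∀ p ∈ T, x ∈ I.conceptI (gciConcept p) := by
  induction T with
  | nil => simp [CT, Interp.conceptI]
  | cons p T ih =>
      cases T with
      | nil => simp [CT]
      | cons q T' =>
          simp only [CT, Interp.conceptI, Set.mem_inter_iff, ih, List.mem_cons]
          constructor
          · rintro ⟨h1, h2⟩ r (rfl | hr)
            · exact h1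
            · exact h2 r hr
          · intro h
            exact ⟨h p (Or.inl rfl), fun r hr => h r (Or.inr hr)⟩

lemma CT_rolesOf (a : Cn) (T : Terminology Cn Rn) :
    (CT a T).rolesOf ⊆ T.rolesOf := by
  induction T with
  | nil => intro S hS; simp [CT, Concept.rolesOf] at hS
  | cons p T ih =>
      cases T with
      | nil =>
          intro S hS
          simp only [CT, gciConcept, Concept.rolesOf] at hS
          exact ⟨p, List.mem_singleton_self p, hS⟩
      | cons q T' =>
          intro S hS
          rcases hS with hS | hS
          · exact ⟨p, List.mem_cons_self, hS⟩
          · obtain ⟨r, hr, hr2⟩ := ih hS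
            exact ⟨r, List.mem_cons_of_mem _ hr, hr2⟩

/-- Restriction of an interpretation to a nonempty subdomain. -/
def restrict (I : Interp Cn Rn) (D : Set I.Dom) (hD : D.Nonempty) : Interp Cn Rn where
  Dom := ↥D
  dom_nonempty := hD.to_subtype
  cI := fun a => {d | d.val ∈ I.cI a}
  rI := fun r => {p | (p.1.val, p.2.val) ∈ I.rI r}

lemma restrict_roleI (I : Interp Cn Rn) (D : Set I.Dom) (hD : D.Nonempty) (S : SRole Rn) :
    (restrict I D hD).roleI S = {p | (p.1.val, p.2.val) ∈ I.roleI S} := by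
  cases S <;> rfl

lemma restrict_conceptI (I : Interp Cn Rn) (D : Set I.Dom) (hD : D.Nonempty) :
    ∀ e : Concept Cn Rn,
      (∀ S ∈ e.rolesOf, ∀ y z : I.Dom, y ∈ D → (y, z) ∈ I.roleI S → z ∈ D) →
      ∀ d : ↥D, (d ∈ (restrict I D hD).conceptI e ↔ d.val ∈ I.conceptI e) := by
  intro e
  induction e with
  | atom a => intro _ d; exact Iff.rfl
  | conj c1 c2 ih1 ih2 =>
      intro hcl d
      simp only [Interp.conceptI, Set.mem_inter_iff,
        ih1 (fun S hS => hcl S (Set.mem_union_left _ hS)) d,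
        ih2 (fun S hS => hcl S (Set.mem_union_right _ hS)) d]
      exact and_congr (ih1 (fun S hS => hcl S (Set.mem_union_left _ hS)) d)
        (ih2 (fun S hS => hcl S (Set.mem_union_right _ hS)) d)
  | disj c1 c2 ih1 ih2 =>
      intro hcl d
      simp only [Interp.conceptI, Set.mem_union,
        ih1 (fun S hS => hcl S (Set.mem_union_left _ hS)) d,
        ih2 (fun S hS => hcl S (Set.mem_union_right _ hS)) d]
      exact or_congr (ih1 (fun S hS => hcl S (Set.mem_union_left _ hS)) d)
        (ih2 (fun S hS => hcl S (Set.mem_union_right _ hS)) d)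
  | neg c1 ih1 =>
      intro hcl d
      simp only [Interp.conceptI, Set.mem_compl_iff, ih1 (fun S hS => hcl S hS) d]
      exact not_congr (ih1 (fun S hS => hcl S hS) d)
  | ex S c1 ih1 =>
      intro hcl d
      have ih := ih1 (fun S' hS => hcl S' (Set.mem_insert_of_mem _ hS))
      constructor
      · rintro ⟨y, hy1, hy2⟩
        rw [restrict_roleI] at hy1
        exact ⟨y.val, hy1, (ih y).mp hy2⟩
      · rintro ⟨y, hy1, hy2⟩
        have hyD : y ∈ D := hcl S (Set.mem_insert _ _) d.val y d.property hy1
        refine ⟨⟨y, hyD⟩, ?_, (ih ⟨y, hyD⟩).mpr hy2⟩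
        rw [restrict_roleI]; exact hy1
  | all S c1 ih1 =>
      intro hcl d
      have ih := ih1 (fun S' hS => hcl S' (Set.mem_insert_of_mem _ hS))
      constructor
      · intro h y hy
        have hyD : y ∈ D := hcl S (Set.mem_insert _ _) d.val y d.property hy
        refine (ih ⟨y, hyD⟩).mp (h ⟨y, hyD⟩ ?_)
        rw [restrict_roleI]; exact hy
      · intro h y hy
        rw [restrict_roleI] at hy
        exact (ih y).mpr (h y.val hy)
  | atLeast n S c1 ih1 =>
      intro hcl d
      have ih := ih1 (fun S' hS => hcl S' (Set.mem_insert_of_mem _ hS))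
      have hset : {y : I.Dom | (d.val, y) ∈ I.roleI S ∧ y ∈ I.conceptI c1}
          = Subtype.val '' {y : ↥D |
              (d, y) ∈ (restrict I D hD).roleI S ∧ y ∈ (restrict I D hD).conceptI c1} := by
        ext y; constructor
        · rintro ⟨h1, h2⟩
          have hyD : y ∈ D := hcl S (Set.mem_insert _ _) d.val y d.property h1
          refine ⟨⟨y, hyD⟩, ⟨?_, (ih ⟨y, hyD⟩).mpr h2⟩, rfl⟩
          rw [restrict_roleI]; exact h1
        · rintro ⟨y', ⟨h1, h2⟩, rfl⟩
          rw [restrict_roleI] at h1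
          exact ⟨h1, (ih y').mp h2⟩
      show (n : ℕ∞) ≤ _ ↔ (n : ℕ∞) ≤ _
      rw [hset, Subtype.val_injective.encard_image]
      rfl
  | atMost n S c1 ih1 =>
      intro hcl d
      have ih := ih1 (fun S' hS => hcl S' (Set.mem_insert_of_mem _ hS))
      have hset : {y : I.Dom | (d.val, y) ∈ I.roleI S ∧ y ∈ I.conceptI c1}
          = Subtype.val '' {y : ↥D |
              (d, y) ∈ (restrict I D hD).roleI S ∧ y ∈ (restrict I D hD).conceptI c1} := by
        ext y; constructor
        · rintro ⟨h1, h2⟩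
          have hyD : y ∈ D := hcl S (Set.mem_insert _ _) d.val y d.property h1
          refine ⟨⟨y, hyD⟩, ⟨?_, (ih ⟨y, hyD⟩).mpr h2⟩, rfl⟩
          rw [restrict_roleI]; exact h1
        · rintro ⟨y', ⟨h1, h2⟩, rfl⟩
          rw [restrict_roleI] at h1
          exact ⟨h1, (ih y').mp h2⟩
      show _ ≤ (n : ℕ∞) ↔ _ ≤ (n : ℕ∞)
      rw [hset, Subtype.val_injective.encard_image]
      rfl

end Aux

/-- internalisation of GCIs. `c` is satisfiable w.r.t. terminology `T`
and role hierarchy `H` iff `c ⊓ C_T ⊓ ∀U.C_T` is satisfiable w.r.t. the extended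
role hierarchy `R_U` (with empty terminology), where `U = u` is a fresh transitive role. -/
theorem internalisation_sat {Cn Rn : Type} (a : Cn) (Rp : Set Rn)
    (T : Terminology Cn Rn) (H : RoleHierarchy Rn) (c : Concept Cn Rn) (u : Rn)
    (roles : Set (SRole Rn))
    (hroles : roles = c.rolesOf ∪ Terminology.rolesOf T ∪ RoleHierarchy.rolesOf H)
    (hfresh : ∀ S ∈ roles, S.base ≠ u) (hfreshRp : u ∉ Rp) :
    (∃ I : Interp Cn Rn, I.respectsTrans Rp ∧ I.modelsT T ∧ I.modelsH H ∧
        (I.conceptI c).Nonempty) ↔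
    (∃ I : Interp Cn Rn, I.respectsTrans (insert u Rp) ∧ I.modelsH (addU H roles u) ∧
        (I.conceptI (.conj c (.conj (CT a T)
          (.all (SRole.name u) (CT a T))))).Nonempty) := by
  subst hroles
  have hcsub : c.rolesOf ⊆ c.rolesOf ∪ Terminology.rolesOf T ∪ RoleHierarchy.rolesOf H :=
    fun S hS => Or.inl (Or.inl hS)
  have hTsub : Terminology.rolesOf T ⊆ c.rolesOf ∪ Terminology.rolesOf T ∪ RoleHierarchy.rolesOf H :=
    fun S hS => Or.inl (Or.inr hS)
  have hHsub : RoleHierarchy.rolesOf H ⊆ c.rolesOf ∪ Terminology.rolesOf T ∪ RoleHierarchy.rolesOf H :=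
    fun S hS => Or.inr hS
  constructor
  · rintro ⟨I, hTr, hT, hH, x, hx⟩
    refine ⟨extendU I u, ?_, ?_, x, ?_, ?_, ?_⟩
    · -- transitivity
      intro r hr y z w hyz hzw
      rcases hyz with h | hyz'
      · exact Or.inl h
      rcases hzw with h | hzw'
      · exact Or.inl h
      rcases hr with rfl | hr
      · exact Or.inl rfl
      · exact Or.inr (hTr r hr y z w hyz' hzw')
    · -- models addU
      intro p hp
      rcases hp with hp | ⟨S, hS, hps⟩
      · rw [extendU_roleI I u p.1 (hfresh p.1 (hHsub ⟨p, hp, Or.inl rfl⟩)),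
            extendU_roleI I u p.2 (hfresh p.2 (hHsub ⟨p, hp, Or.inr rfl⟩))]
        exact hH p hp
      · rcases hps with rfl | rfl <;> exact fun q _ => Or.inl rfl
    · rw [extendU_conceptI I u c (fun S hS => hfresh S (hcsub hS))]
      exact hx
    · rw [extendU_conceptI I u (CT a T) (fun S hS => hfresh S (hTsub (CT_rolesOf a T hS)))]
      exact (mem_CT I a T x).mpr (fun p hp => (conceptI_gci I p x).mpr (fun h => hT p hp h))
    · intro y _
      rw [extendU_conceptI I u (CT a T) (fun S hS => hfresh S (hTsub (CT_rolesOf a T hS)))]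
      exact (mem_CT I a T y).mpr (fun p hp => (conceptI_gci I p y).mpr (fun h => hT p hp h))
  · rintro ⟨I, hTr, hH, x, hc, hct, hall⟩
    set D : Set I.Dom := insert x {y | (x, y) ∈ I.rI u} with hDdef
    have hDne : D.Nonempty := ⟨x, Set.mem_insert _ _⟩
    have hclosed : ∀ S ∈ c.rolesOf ∪ Terminology.rolesOf T ∪ RoleHierarchy.rolesOf H,
        ∀ y z : I.Dom, y ∈ D → (y, z) ∈ I.roleI S → z ∈ D := by
      intro S hS y z hy hyz
      have hup : (S, SRole.name u) ∈ addU H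
          (c.rolesOf ∪ Terminology.rolesOf T ∪ RoleHierarchy.rolesOf H) u :=
        Or.inr ⟨S, hS, Or.inl rfl⟩
      have h1 : (y, z) ∈ I.rI u := hH _ hup hyz
      rcases hy with rfl | hy
      · exact Set.mem_insert_of_mem _ h1
      · exact Set.mem_insert_of_mem _ (hTr u (Set.mem_insert _ _) x y z hy h1)
    have hDct : ∀ d ∈ D, d ∈ I.conceptI (CT a T) := by
      intro d hd
      rcases hd with rfl | hd
      · exact hct
      · exact hall d hd
    refine ⟨restrict I D hDne, ?_, ?_, ?_, ⟨x, Set.mem_insert _ _⟩, ?_⟩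
    · intro r hr y z w hyz hzw
      exact hTr r (Set.mem_insert_of_mem _ hr) y.val z.val w.val hyz hzw
    · intro p hp d hd
      have h1sub : p.1.rolesOf ⊆ _ := fun S hS => hTsub ⟨p, hp, Or.inl hS⟩
      have h2sub : p.2.rolesOf ⊆ _ := fun S hS => hTsub ⟨p, hp, Or.inr hS⟩
      have hd1 : d.val ∈ I.conceptI p.1 :=
        (restrict_conceptI I D hDne p.1 (fun S hS => hclosed S (h1sub hS)) d).mp hd
      have hd2 : d.val ∈ I.conceptI p.2 :=
        (conceptI_gci I p d.val).mp ((mem_CT I a T d.val).mp (hDct d.val d.property) p hp) hd1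
      exact (restrict_conceptI I D hDne p.2 (fun S hS => hclosed S (h2sub hS)) d).mpr hd2
    · intro p hp q hq
      rw [restrict_roleI] at hq ⊢
      exact hH p (Or.inl hp) hq
    · rcases (show (x ∈ I.conceptI c) from hc) with hc'
      exact (restrict_conceptI I D hDne c (fun S hS => hclosed S (hcsub hS))
        ⟨x, Set.mem_insert _ _⟩).mpr hc'

end SHIQ
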